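/- Let W : ℤ → ℂ be a sequence such that W(−n) = −W(n) for every integer n, W(n) ≠ 0 for every integer n ≥ 1, and for all integers k, p, q: W(k)²·W(p+q)·W(p−q) + W(p)²·W(q+k)·W(q−k) + W(q)²·W(k+p)·W(k−p) = 0. For integers 1 ≤ k ≤ n define F(n,k) = W(k)^{2(n−k)} / ( ∏_{i=2k+1}^{n+k} W(i) · ∏_{i=1}^{n−k} W(i) ) and G(n,k) = (−1)^{n−k} · ( W(k)² / W(n)² ) · W(n)^{2(n−k)} · ∏_{i=1}^{n+k−1} W(i) / ( ∏_{i=1}^{2n−1} W(i) · ∏_{i=1}^{n−k} W(i) ). Then for all integers 1 ≤ k ≤ n, ∑_{i=k}^{n} F(n,i)·G(i,k) equals 1 if n = k and equals 0 if n > k. -/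

import Mathlib

namespace EDSInv
open Finset

variable (W : ℤ → ℂ)

noncomputable def T (n k i : ℤ) : ℂ :=
  (W i ^ (2 * (n - i)) /
    ((∏ j ∈ Finset.Icc (2 * i + 1) (n + i), W j) *
      ∏ j ∈ Finset.Icc 1 (n - i), W j)) *
  ((-1 : ℂ) ^ (i - k) * (W k ^ 2 / W i ^ 2) *
    (W i ^ (2 * (i - k)) * ∏ j ∈ Finset.Icc 1 (i + k - 1), W j) /
    ((∏ j ∈ Finset.Icc 1 (2 * i - 1), W j) *
      ∏ j ∈ Finset.Icc 1 (i - k), W j))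

noncomputable def S (n k : ℤ) : ℂ := ∑ i ∈ Finset.Icc k n, T W n k i

lemma prod_split (f : ℤ → ℂ) (a b : ℤ) (h : a ≤ b) :
    (∏ j ∈ Finset.Icc a b, f j) = (∏ j ∈ Finset.Icc a (b-1), f j) * f b := by
  have h2 : Finset.Icc a b = insert b (Finset.Icc a (b-1)) := by
    ext x; simp only [Finset.mem_Icc, Finset.mem_insert]; omega
  rw [h2, Finset.prod_insert (by simp [Finset.mem_Icc]), mul_comm]

variable (hW : ∀ n : ℤ, 1 ≤ n → W n ≠ 0)

section
include hW

lemma prod_ne (a b : ℤ) (ha : 1 ≤ a) : (∏ j ∈ Finset.Icc a b, W j) ≠ 0 := by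
  refine Finset.prod_ne_zero_iff.2 fun j hj => hW j ?_
  have := (Finset.mem_Icc.1 hj).1; omega

lemma diag (k : ℤ) (hk : 1 ≤ k) : T W k k k = 1 := by
  have h1 : W k ≠ 0 := hW k hk
  have h2 : (∏ j ∈ Finset.Icc 1 (2*k-1), W j) ≠ 0 := prod_ne W hW 1 _ le_rfl
  unfold T
  rw [sub_self, mul_zero, zpow_zero, zpow_zero]
  rw [show k + k = 2 * k by ring]
  rw [Finset.Icc_eq_empty (by omega : ¬ (2*k+1 : ℤ) ≤ 2*k),
      Finset.Icc_eq_empty (by omega : ¬ (1:ℤ) ≤ 0)]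
  simp only [Finset.prod_empty]
  field_simp

lemma M1 (n k i : ℤ) (hi : 1 ≤ i) (hin : i < n) :
    T W n k i = T W (n-1) k i * (W i^2 / (W (n+i) * W (n-i))) := by
  have hWi : W i ≠ 0 := hW i hi
  have hni : W (n+i) ≠ 0 := hW _ (by omega)
  have hni' : W (n-i) ≠ 0 := hW _ (by omega)
  have hp1 : (∏ j ∈ Finset.Icc (2*i+1) (n-1+i), W j) ≠ 0 := prod_ne W hW _ _ (by omega)
  have hp2 : (∏ j ∈ Finset.Icc 1 (n-1-i), W j) ≠ 0 := prod_ne W hW 1 _ le_rfl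
  have e1 : (∏ j ∈ Finset.Icc (2*i+1) (n+i), W j)
      = (∏ j ∈ Finset.Icc (2*i+1) (n-1+i), W j) * W (n+i) := by
    rw [prod_split W (2*i+1) (n+i) (by omega), show n+i-1 = n-1+i by ring]
  have e2 : (∏ j ∈ Finset.Icc 1 (n-i), W j)
      = (∏ j ∈ Finset.Icc 1 (n-1-i), W j) * W (n-i) := by
    rw [prod_split W 1 (n-i) (by omega), show n-i-1 = n-1-i by ring]
  have e3 : W i ^ (2*(n-i)) = W i ^ (2*(n-1-i)) * W i ^ (2:ℕ) := by
    rw [show 2*(n-i) = 2*(n-1-i) + ((2:ℕ):ℤ) by push_cast; ring, zpow_add₀ hWi,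
      zpow_natCast]
  have hz1 : W i ^ (2*(n-1-i)) ≠ 0 := zpow_ne_zero _ hWi
  have hF : (W i ^ (2 * (n - i)) /
        ((∏ j ∈ Finset.Icc (2 * i + 1) (n + i), W j) *
          ∏ j ∈ Finset.Icc 1 (n - i), W j))
      = (W i ^ (2 * (n - 1 - i)) /
          ((∏ j ∈ Finset.Icc (2 * i + 1) (n - 1 + i), W j) *
            ∏ j ∈ Finset.Icc 1 (n - 1 - i), W j)) * (W i^2 / (W (n+i) * W (n-i))) := by
    rw [e1, e2, e3]
    field_simp
  unfold T
  rw [hF]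
  ring

lemma M2 (n k i : ℤ) (hk : 1 ≤ k) (hki : k < i) :
    T W n (k+1) i = T W n k i * (-(W (k+1)^2 / W k^2)) * ((W (i+k) * W (i-k)) / W i ^ 2) := by
  have hWi : W i ≠ 0 := hW i (by omega)
  have hWk : W k ≠ 0 := hW k hk
  have hWk1 : W (k+1) ≠ 0 := hW _ (by omega)
  have hik : W (i+k) ≠ 0 := hW _ (by omega)
  have hik' : W (i-k) ≠ 0 := hW _ (by omega)
  have hp3 : (∏ j ∈ Finset.Icc 1 (i+k-1), W j) ≠ 0 := prod_ne W hW 1 _ le_rfl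
  have hp4 : (∏ j ∈ Finset.Icc 1 (2*i-1), W j) ≠ 0 := prod_ne W hW 1 _ le_rfl
  have hp5 : (∏ j ∈ Finset.Icc 1 (i-(k+1)), W j) ≠ 0 := prod_ne W hW 1 _ le_rfl
  have e3 : (∏ j ∈ Finset.Icc 1 (i+(k+1)-1), W j)
      = (∏ j ∈ Finset.Icc 1 (i+k-1), W j) * W (i+k) := by
    rw [show i+(k+1)-1 = i+k by ring, prod_split W 1 (i+k) (by omega),
      show i+k-1 = i+k-1 from rfl]
  have e5 : (∏ j ∈ Finset.Icc 1 (i-k), W j)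
      = (∏ j ∈ Finset.Icc 1 (i-(k+1)), W j) * W (i-k) := by
    rw [prod_split W 1 (i-k) (by omega), show i-k-1 = i-(k+1) by ring]
  have e2 : W i ^ (2*(i-k)) = W i ^ (2*(i-(k+1))) * W i ^ (2:ℕ) := by
    rw [show 2*(i-k) = 2*(i-(k+1)) + ((2:ℕ):ℤ) by push_cast; ring, zpow_add₀ hWi,
      zpow_natCast]
  have esgn : ((-1 : ℂ)) ^ (i-k) = ((-1:ℂ)) ^ (i-(k+1)) * (-1) := by
    rw [show i-k = i-(k+1) + 1 by ring, zpow_add₀ (by norm_num : (-1:ℂ) ≠ 0), zpow_one]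
  have hz2 : W i ^ (2*(i-(k+1))) ≠ 0 := zpow_ne_zero _ hWi
  have hz3 : ((-1:ℂ)) ^ (i-(k+1)) ≠ 0 := zpow_ne_zero _ (by norm_num)
  have hG : ((-1 : ℂ) ^ (i - (k+1)) * (W (k+1) ^ 2 / W i ^ 2) *
        (W i ^ (2 * (i - (k+1))) * ∏ j ∈ Finset.Icc 1 (i + (k+1) - 1), W j) /
        ((∏ j ∈ Finset.Icc 1 (2 * i - 1), W j) *
          ∏ j ∈ Finset.Icc 1 (i - (k+1)), W j))
      = ((-1 : ℂ) ^ (i - k) * (W k ^ 2 / W i ^ 2) *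
          (W i ^ (2 * (i - k)) * ∏ j ∈ Finset.Icc 1 (i + k - 1), W j) /
          ((∏ j ∈ Finset.Icc 1 (2 * i - 1), W j) *
            ∏ j ∈ Finset.Icc 1 (i - k), W j))
        * (-(W (k+1)^2 / W k^2)) * ((W (i+k) * W (i-k)) / W i ^ 2) := by
    rw [e3, e5, e2, esgn]
    set s : ℂ := ((-1:ℂ)) ^ (i-(k+1)) with hs
    set a : ℂ := W i ^ (2*(i-(k+1))) with ha
    set P3 : ℂ := ∏ j ∈ Finset.Icc 1 (i+k-1), W j with hP3
    set P4 : ℂ := ∏ j ∈ Finset.Icc 1 (2*i-1), W j with hP4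
    set P5 : ℂ := ∏ j ∈ Finset.Icc 1 (i-(k+1)), W j with hP5
    have hC : (W k ^ 2 * W i ^ 4 * W (i - k) * P4 * P5) *
        ((W k ^ 2)⁻¹ * (W i ^ 4)⁻¹ * (W (i - k))⁻¹ * P4⁻¹ * P5⁻¹) = 1 := by
      field_simp
    field_simp
  unfold T
  rw [hG]
  ring

end

lemma h3 (hodd : ∀ n : ℤ, W (-n) = -W n)
    (hprop : ∀ k p q : ℤ,
      W k ^ 2 * W (p + q) * W (p - q) + W p ^ 2 * W (q + k) * W (q - k) +
        W q ^ 2 * W (k + p) * W (k - p) = 0) (n k i : ℤ) :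
    W (n+k) * W (n-k) * W i ^ 2
      = W k ^ 2 * (W (n+i) * W (n-i)) + W n ^ 2 * (W (i+k) * W (i-k)) := by
  have h := hprop i n k
  have o1 : W (k - i) = - W (i - k) := by
    rw [show k - i = -(i-k) by ring, hodd]
  have o2 : W (i - n) = - W (n - i) := by
    rw [show i - n = -(n-i) by ring, hodd]
  have c1 : W (k + i) = W (i + k) := by rw [add_comm]
  have c2 : W (i + n) = W (n + i) := by rw [add_comm]
  rw [o1, o2, c1, c2] at h
  linear_combination h

section
include hW

lemma L1 (n k : ℤ) (hk : 1 ≤ k) (hkn : k < n) :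
    W (n+k) * W (n-k) * T W n k k = W k ^ 2 * T W (n-1) k k := by
  have hnk : W (n+k) ≠ 0 := hW _ (by omega)
  have hnk' : W (n-k) ≠ 0 := hW _ (by omega)
  rw [M1 W hW n k k hk hkn]
  set B := T W (n-1) k k
  field_simp

lemma L3 (n k : ℤ) (hk : 1 ≤ k) (hkn : k < n) :
    W (k+1) ^ 2 * (W (n+k) * W (n-k)) * T W n k n
      = -(W n ^ 2 * W k ^ 2) * T W n (k+1) n := by
  have hWn : W n ≠ 0 := hW n (by omega)
  have hWk : W k ≠ 0 := hW k hk
  have hWk1 : W (k+1) ≠ 0 := hW _ (by omega)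
  have hnk : W (n+k) ≠ 0 := hW _ (by omega)
  have hnk' : W (n-k) ≠ 0 := hW _ (by omega)
  rw [M2 W hW n k n hk hkn]
  set B := T W n k n
  field_simp

lemma L2 (hodd : ∀ n : ℤ, W (-n) = -W n)
    (hprop : ∀ k p q : ℤ,
      W k ^ 2 * W (p + q) * W (p - q) + W p ^ 2 * W (q + k) * W (q - k) +
        W q ^ 2 * W (k + p) * W (k - p) = 0)
    (n k i : ℤ) (hk : 1 ≤ k) (hki : k < i) (hin : i < n) :
    W (k+1) ^ 2 * (W (n+k) * W (n-k)) * T W n k i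
      = W (k+1) ^ 2 * (W k ^ 2 * T W (n-1) k i)
        + (-(W n ^ 2 * W k ^ 2)) * T W n (k+1) i := by
  have hWi : W i ≠ 0 := hW i (by omega)
  have hWk : W k ≠ 0 := hW k hk
  have hWk1 : W (k+1) ≠ 0 := hW _ (by omega)
  have hWn : W n ≠ 0 := hW n (by omega)
  have hni : W (n+i) ≠ 0 := hW _ (by omega)
  have hni' : W (n-i) ≠ 0 := hW _ (by omega)
  have key := h3 W hodd hprop n k i
  rw [M2 W hW n k i hk hki, M1 W hW n k i (by omega) hin]
  set B := T W (n-1) k i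
  field_simp
  linear_combination B * key

lemma rec_step (hodd : ∀ n : ℤ, W (-n) = -W n)
    (hprop : ∀ k p q : ℤ,
      W k ^ 2 * W (p + q) * W (p - q) + W p ^ 2 * W (q + k) * W (q - k) +
        W q ^ 2 * W (k + p) * W (k - p) = 0)
    (n k : ℤ) (hk : 1 ≤ k) (hkn : k < n) :
    W (k+1) ^ 2 * (W (n+k) * W (n-k)) * S W n k
      = W (k+1) ^ 2 * (W k ^ 2 * S W (n-1) k)
        + (-(W n ^ 2 * W k ^ 2)) * S W n (k+1) := by
  have hsplit1 : Finset.Icc k n = insert k (insert n (Finset.Icc (k+1) (n-1))) := by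
    ext x; simp only [Finset.mem_Icc, Finset.mem_insert]; omega
  have hsplit2 : Finset.Icc k (n-1) = insert k (Finset.Icc (k+1) (n-1)) := by
    ext x; simp only [Finset.mem_Icc, Finset.mem_insert]; omega
  have hsplit3 : Finset.Icc (k+1) n = insert n (Finset.Icc (k+1) (n-1)) := by
    ext x; simp only [Finset.mem_Icc, Finset.mem_insert]; omega
  have hnm : n ∉ Finset.Icc (k+1) (n-1) := by simp [Finset.mem_Icc]
  have hkm : k ∉ insert n (Finset.Icc (k+1) (n-1)) := by
    simp only [Finset.mem_insert, Finset.mem_Icc]; omega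
  have hkm2 : k ∉ Finset.Icc (k+1) (n-1) := by
    simp only [Finset.mem_Icc]; omega
  have hsum : W (k+1) ^ 2 * (W (n+k) * W (n-k)) * ∑ i ∈ Finset.Icc (k+1) (n-1), T W n k i
      = W (k+1) ^ 2 * (W k ^ 2 * ∑ i ∈ Finset.Icc (k+1) (n-1), T W (n-1) k i)
        + (-(W n ^ 2 * W k ^ 2))
            * ∑ i ∈ Finset.Icc (k+1) (n-1), T W n (k+1) i := by
    have e1 : W (k+1) ^ 2 * (W k ^ 2 * ∑ i ∈ Finset.Icc (k+1) (n-1), T W (n-1) k i)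
        = ∑ i ∈ Finset.Icc (k+1) (n-1), W (k+1) ^ 2 * (W k ^ 2 * T W (n-1) k i) := by
      rw [Finset.mul_sum, Finset.mul_sum]
    have e2 : (-(W n ^ 2 * W k ^ 2)) * ∑ i ∈ Finset.Icc (k+1) (n-1), T W n (k+1) i
        = ∑ i ∈ Finset.Icc (k+1) (n-1), (-(W n ^ 2 * W k ^ 2)) * T W n (k+1) i :=
      Finset.mul_sum _ _ _
    rw [Finset.mul_sum, e1, e2, ← Finset.sum_add_distrib]
    refine Finset.sum_congr rfl fun i hi => ?_
    have := Finset.mem_Icc.1 hi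
    exact L2 W hW hodd hprop n k i hk (by omega) (by omega)
  have l1 := L1 W hW n k hk hkn
  have l3 := L3 W hW n k hk hkn
  unfold S
  rw [hsplit1, hsplit2, hsplit3,
    Finset.sum_insert hkm, Finset.sum_insert hnm, Finset.sum_insert hkm2,
    Finset.sum_insert hnm]
  linear_combination hsum + W (k+1)^2 * l1 + l3

end
end EDSInv

/-- Example 4.6 of Wang–Ma: the matrix inversion for elliptic divisibility
sequences. -/
theorem eds_matrix_inversion
    (W : ℤ → ℂ)
    (hodd : ∀ n : ℤ, W (-n) = -W n)
    (hW : ∀ n : ℤ, 1 ≤ n → W n ≠ 0)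
    (hprop : ∀ k p q : ℤ,
      W k ^ 2 * W (p + q) * W (p - q) + W p ^ 2 * W (q + k) * W (q - k) +
        W q ^ 2 * W (k + p) * W (k - p) = 0) :
    ∀ k n : ℤ, 1 ≤ k → k ≤ n →
      (∑ i ∈ Finset.Icc k n,
        -- F(n,i)
        (W i ^ (2 * (n - i)) /
          ((∏ j ∈ Finset.Icc (2 * i + 1) (n + i), W j) *
            ∏ j ∈ Finset.Icc 1 (n - i), W j)) *
        -- G(i,k)
        ((-1 : ℂ) ^ (i - k) * (W k ^ 2 / W i ^ 2) *
          (W i ^ (2 * (i - k)) * ∏ j ∈ Finset.Icc 1 (i + k - 1), W j) /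
          ((∏ j ∈ Finset.Icc 1 (2 * i - 1), W j) *
            ∏ j ∈ Finset.Icc 1 (i - k), W j))) =
      if n = k then 1 else 0 := by
  have main : ∀ d : ℕ, ∀ k n : ℤ, 1 ≤ k → n = k + d →
      EDSInv.S W n k = if n = k then 1 else 0 := by
    intro d
    induction d using Nat.strong_induction_on with
    | _ d ih =>
      intro k n hk hn
      match d with
      | 0 =>
        have hnk : n = k := by omega
        rw [hnk, if_pos rfl]
        unfold EDSInv.S
        rw [Finset.Icc_self, Finset.sum_singleton]
        exact EDSInv.diag W hW k hk
      | Nat.succ d =>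
        have hkn : k < n := by omega
        rw [if_neg (by omega)]
        have hrec := EDSInv.rec_step W hW hodd hprop n k hk hkn
        have hS1 : EDSInv.S W (n-1) k = if (n-1 : ℤ) = k then 1 else 0 :=
          ih d (by omega) k (n-1) hk (by omega)
        have hS2 : EDSInv.S W n (k+1) = if n = k+1 then 1 else 0 :=
          ih d (by omega) (k+1) n (by omega) (by omega)
        have hnk : W (n+k) ≠ 0 := hW _ (by omega)
        have hnk' : W (n-k) ≠ 0 := hW _ (by omega)
        have hWk1 : W (k+1) ≠ 0 := hW _ (by omega)
        have hzero : W (k+1) ^ 2 * (W (n+k) * W (n-k)) * EDSInv.S W n k = 0 := by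
          rw [hrec, hS1, hS2]
          by_cases h1 : n = k + 1
          · rw [if_pos (by omega), if_pos h1]
            subst h1
            ring
          · rw [if_neg (by omega), if_neg h1]
            ring
        have hne : W (k+1) ^ 2 * (W (n+k) * W (n-k)) ≠ 0 :=
          mul_ne_zero (pow_ne_zero 2 hWk1) (mul_ne_zero hnk hnk')
        exact (mul_eq_zero.1 hzero).resolve_left hne
  intro k n hk hkn
  exact main (n-k).toNat k n hk (by omega)
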